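/- Let n ≥ 4 be even, q = 2^n, α ∈ 𝔽_q^*, and let ω be a fixed element of 𝔽_4 \ 𝔽_2 regarded as an element of 𝔽_q. Then for a ∈ 𝔽_q^*, the derivative D_aF_{0,α} is 2-to-1 if and only if a ∉ {0, α, αω, αω²} and Tr(α/(a+α)) = Tr(α/a) = 1. Equivalently, R-Spec_q(F_{0,α}) = {a ∈ 𝔽_q \ {0, α, αω, αω²} : Tr(α/(a+α)) = Tr(α/a) = 1}. -/
import Mathlib


namespace APNPaper

open Finset Polynomial

variable {F : Type*} [Field F] [Fintype F] [DecidableEq F]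

/-- `δ_G(a,b)`: the number of `x` with `D_aG(x) = G(x) + G(x+a) = b`. -/
def delta (G : F → F) (a b : F) : ℕ :=
  (Finset.univ.filter fun x : F => G x + G (x + a) = b).card

/-- `∇_G(a,x) = δ_G(a, D_aG(x))`. -/
def nabla (G : F → F) (a x : F) : ℕ := delta G a (G x + G (x + a))

/-- `G` is almost perfect nonlinear. -/
def IsAPN (G : F → F) : Prop := ∀ a : F, a ≠ 0 → ∀ b : F, delta G a b ≤ 2

/-- The derivative `D_aG` is 2-to-1, i.e. `G` satisfies property `(p_a)`. -/
def TwoToOne (G : F → F) (a : F) : Prop :=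
  ∀ b : F, delta G a b = 0 ∨ delta G a b = 2

instance instDecTwoToOne (G : F → F) (a : F) : Decidable (TwoToOne G a) := by
  unfold TwoToOne; infer_instance

/-- The row spectrum `R-Spec_q(G)`. -/
def RSpec (G : F → F) : Finset F :=
  (Finset.univ.erase (0 : F)).filter fun a => TwoToOne G a

/-- `S_a = {x : ∇_G(a,x) = 2}`. -/
def Sset (G : F → F) (a : F) : Finset F :=
  Finset.univ.filter fun x : F => nabla G a x = 2

/-- `w_{S_a^c} = Σ_{b : δ_G(a,b) > 2} (δ_G(a,b)/2)²`. -/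
def wS (G : F → F) (a : F) : ℤ :=
  ∑ b : F, if 2 < delta G a b then ((delta G a b / 2 : ℕ) : ℤ) ^ 2 else 0

/-- `χ_a = 1` if `S_a = 𝔽_q`, and `0` otherwise. -/
def chi (G : F → F) (a : F) : ℤ :=
  if Sset G a = Finset.univ then 1 else 0

/-- `𝒟(G) = Σ_{a ≠ 0} (|S_a| − w_{S_a^c} + χ_a)`. -/
def Dscr (G : F → F) : ℤ :=
  ∑ a ∈ Finset.univ.erase (0 : F), (((Sset G a).card : ℤ) - wS G a + chi G a)

/-- The APN-defect `APN-def(G) = q² − 1 − 𝒟(G)`. -/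
def APNdef (G : F → F) : ℤ := (Fintype.card F : ℤ) ^ 2 - 1 - Dscr G

/-- The differential uniformity `δ_G`. -/
def diffUnif (G : F → F) : ℕ :=
  ((Finset.univ.erase (0 : F)) ×ˢ Finset.univ).sup fun p => delta G p.1 p.2

/-- The set of vanishing flats of `G`. -/
def VF (G : F → F) : Set (Finset F) :=
  {S | ∃ x y z : F, x ≠ y ∧ x ≠ z ∧ y ≠ z ∧
    G x + G y + G z + G (x + y + z) = 0 ∧ S = ({x, y, z, x + y + z} : Finset F)}

/-- The absolute trace `Tr(z) = z + z² + ⋯ + z^{2^{n-1}}` (with values in `{0,1} ⊆ F`). -/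
def Tr (n : ℕ) (z : F) : F := ∑ i ∈ Finset.range n, z ^ (2 ^ i)

/-- The modification `F_{0,α}` of the inverse function: the values of the inverse
function at `0` and `α` are swapped. -/
def Fmod (α : F) : F → F :=
  fun x => if x = 0 then α⁻¹ else if x = α then 0 else x⁻¹

set_option linter.unusedSectionVars false

section Aux
variable [CharP F 2]

lemma Tr_add (n : ℕ) (x y : F) : Tr n (x + y) = Tr n x + Tr n y := by
  unfold Tr
  rw [← Finset.sum_add_distrib]
  exact Finset.sum_congr rfl fun i _ => add_pow_char_pow ..

lemma Tr_sq (n : ℕ) (hq : ∀ z : F, z ^ (2^n) = z) (z : F) :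
    Tr n (z^2) = Tr n z := by
  have h1 : ∀ i : ℕ, (z^2) ^ (2^i) = z ^ (2^(i+1)) := by
    intro i; rw [← pow_mul, pow_succ, mul_comm (2^i) 2]
  have h2 : Tr n (z^2) + z = Tr n z + z := by
    calc Tr n (z^2) + z = (∑ i ∈ Finset.range n, z ^ (2^(i+1))) + z ^ (2^0) := by
          unfold Tr
          congr 1
          · exact Finset.sum_congr rfl fun i _ => h1 i
          · simp
      _ = ∑ i ∈ Finset.range (n+1), z ^ (2^i) :=
          (Finset.sum_range_succ' (fun k => z ^ (2^k)) n).symm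
      _ = Tr n z + z ^ (2^n) := Finset.sum_range_succ _ n
      _ = Tr n z + z := by rw [hq]
  exact add_right_cancel h2

lemma Tr_zero_or_one (n : ℕ) (hq : ∀ z : F, z ^ (2^n) = z) (z : F) :
    Tr n z = 0 ∨ Tr n z = 1 := by
  have h : (Tr n z) ^ 2 = Tr n z := by
    have h0 : (Tr n z) ^ 2 = Tr n (z^2) := by
      unfold Tr
      rw [sum_pow_char]
      exact Finset.sum_congr rfl fun i _ => pow_right_comm z _ _
    rw [h0, Tr_sq n hq]
  have h2 : Tr n z * (Tr n z - 1) = 0 := by linear_combination h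
  rcases mul_eq_zero.mp h2 with h3 | h3
  · exact Or.inl h3
  · exact Or.inr (sub_eq_zero.mp h3)

lemma Tr_sq_add_self (n : ℕ) (hq : ∀ z : F, z ^ (2^n) = z) (x : F) :
    Tr n (x^2 + x) = 0 := by
  rw [Tr_add, Tr_sq n hq, CharTwo.add_self_eq_zero]

lemma Tr_one_eq_zero (n : ℕ) (heven : Even n) : Tr n (1 : F) = 0 := by
  unfold Tr
  simp only [one_pow, Finset.sum_const, Finset.card_range, nsmul_eq_mul, mul_one]
  exact (CharP.cast_eq_zero_iff F 2 n).mpr heven.two_dvd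

lemma exists_Tr_eq_one (n : ℕ) (hn : 1 ≤ n) (hcard : Fintype.card F = 2 ^ n)
    (hq : ∀ z : F, z ^ (2^n) = z) : ∃ z : F, Tr n z = 1 := by
  by_contra hc
  push_neg at hc
  have hzero : ∀ z : F, Tr n z = 0 := by
    intro z
    exact (Tr_zero_or_one n hq z).resolve_right (hc z)
  set p : F[X] := ∑ i ∈ Finset.range n, (X : F[X]) ^ (2^i) with hp
  have heval : ∀ z : F, p.eval z = Tr n z := by
    intro z; simp [hp, Tr, eval_finset_sum]
  have hpne : p ≠ 0 := by
    intro h0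
    have hcoeff : p.coeff (2^(n-1)) = 1 := by
      rw [hp, finset_sum_coeff]
      rw [Finset.sum_eq_single (n-1)]
      · simp
      · intro i hi hine
        rw [coeff_X_pow, if_neg]
        exact fun h => hine (Nat.pow_right_injective le_rfl h.symm)
      · intro h
        exact absurd (Finset.mem_range.mpr (by omega)) h
    rw [h0] at hcoeff
    simp at hcoeff
  have hdeg : p.natDegree < Fintype.card F := by
    have : p.natDegree ≤ 2^(n-1) := by
      apply Polynomial.natDegree_sum_le_of_forall_le
      intro i hi
      rw [natDegree_X_pow]
      have : i ≤ n - 1 := by have := Finset.mem_range.mp hi; omega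
      exact Nat.pow_le_pow_right (by norm_num) this
    calc p.natDegree ≤ 2^(n-1) := this
      _ < 2^n := Nat.pow_lt_pow_right (by norm_num) (by omega)
      _ = Fintype.card F := hcard.symm
  have := Polynomial.eq_zero_of_natDegree_lt_card_of_eval_eq_zero' p Finset.univ
    (fun z _ => by rw [heval, hzero]) (by simpa using hdeg)
  exact hpne this

lemma Tr_eq_zero_iff (n : ℕ) (hn : 1 ≤ n) (hcard : Fintype.card F = 2 ^ n)
    (hq : ∀ z : F, z ^ (2^n) = z) (c : F) :
    Tr n c = 0 ↔ ∃ x : F, x^2 + x = c := by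
  have h2 : (2:F) = 0 := CharTwo.two_eq_zero
  constructor
  · intro hc
    -- counting argument
    set f : F → F := fun x => x^2 + x with hf
    set I : Finset F := Finset.univ.image f with hI
    set T0 : Finset F := Finset.univ.filter (fun z => Tr n z = 0) with hT0
    have hsub : I ⊆ T0 := by
      intro b hb
      rw [hI, Finset.mem_image] at hb
      obtain ⟨x, _, hx⟩ := hb
      rw [hT0, Finset.mem_filter]
      exact ⟨Finset.mem_univ _, by rw [← hx]; exact Tr_sq_add_self n hq x⟩
    have hfiber : ∀ b ∈ I, (Finset.univ.filter (fun x => f x = b)).card = 2 := by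
      intro b hb
      rw [hI, Finset.mem_image] at hb
      obtain ⟨x, _, hx⟩ := hb
      have : Finset.univ.filter (fun y => f y = b) = {x, x + 1} := by
        ext y
        simp only [Finset.mem_filter, Finset.mem_univ, true_and, Finset.mem_insert,
          Finset.mem_singleton]
        constructor
        · intro hy
          have h1 : (y + x) * (y + x + 1) = 0 := by
            have : f y = f x := by rw [hy, hx]
            rw [hf] at this
            simp only at this
            linear_combination this + (y*x + x^2 + x) * h2
          rcases mul_eq_zero.mp h1 with h | h
          · left; linear_combination h - x * h2
          · right; linear_combination h - (x+1) * h2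
        · rintro (rfl | rfl)
          · exact hx
          · rw [← hx, hf]
            show (x+1)^2 + (x+1) = x^2 + x
            linear_combination (x+1) * h2
      rw [this, Finset.card_insert_of_notMem, Finset.card_singleton]
      simp only [Finset.mem_singleton]
      intro h
      have : (1 : F) = 0 := by linear_combination -h
      exact one_ne_zero this
    have hcardI : 2 * I.card = Fintype.card F := by
      have h1 : (Finset.univ : Finset F).card = ∑ b ∈ I, (Finset.univ.filter (fun x => f x = b)).card := by
        rw [hI]
        exact Finset.card_eq_sum_card_image f Finset.univ
      rw [Finset.card_univ] at h1
      rw [h1, Finset.sum_congr rfl hfiber, Finset.sum_const, smul_eq_mul, mul_comm]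
    have hcardT0 : 2 * T0.card = Fintype.card F := by
      obtain ⟨z₀, hz₀⟩ := exists_Tr_eq_one n hn hcard hq
      set T1 : Finset F := Finset.univ.filter (fun z => ¬ (Tr n z = 0)) with hT1
      have hbij : T0.card = T1.card := by
        apply Finset.card_bij' (fun z _ => z + z₀) (fun z _ => z + z₀)
        · intro z hz
          rw [hT0, Finset.mem_filter] at hz
          rw [hT1, Finset.mem_filter]
          refine ⟨Finset.mem_univ _, ?_⟩
          rw [Tr_add, hz.2, hz₀, zero_add]
          exact one_ne_zero
        · intro z hz
          rw [hT1, Finset.mem_filter] at hz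
          rw [hT0, Finset.mem_filter]
          refine ⟨Finset.mem_univ _, ?_⟩
          have h1 : Tr n z = 1 := (Tr_zero_or_one n hq z).resolve_left hz.2
          rw [Tr_add, h1, hz₀]
          exact CharTwo.add_self_eq_zero 1
        · intro z _; rw [add_assoc, CharTwo.add_self_eq_zero, add_zero]
        · intro z _; rw [add_assoc, CharTwo.add_self_eq_zero, add_zero]
      have hsum : T0.card + T1.card = Fintype.card F := by
        rw [hT0, hT1, Finset.card_filter_add_card_filter_not, Finset.card_univ]
      omega
    have hIeq : I = T0 := Finset.eq_of_subset_of_card_le hsub (by omega)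
    have hcmem : c ∈ T0 := by rw [hT0, Finset.mem_filter]; exact ⟨Finset.mem_univ _, hc⟩
    rw [← hIeq, hI, Finset.mem_image] at hcmem
    obtain ⟨x, _, hx⟩ := hcmem
    exact ⟨x, hx⟩
  · rintro ⟨x, rfl⟩
    exact Tr_sq_add_self n hq x

lemma twoToOne_iff (G : F → F) (a : F) (ha : a ≠ 0) :
    TwoToOne G a ↔ ∀ x y : F, G x + G (x + a) = G y + G (y + a) → y = x ∨ y = x + a := by
  have haa : ∀ x : F, x + a + a = x := by
    intro x; rw [add_assoc, CharTwo.add_self_eq_zero, add_zero]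
  have hDshift : ∀ x : F, G (x+a) + G (x+a+a) = G x + G (x + a) := by
    intro x; rw [haa, add_comm]
  have hne : ∀ x : F, x ≠ x + a := by
    intro x h
    exact ha (by linear_combination -h)
  constructor
  · intro h x y hxy
    by_contra hc
    push_neg at hc
    obtain ⟨h1, h2⟩ := hc
    set b := G x + G (x + a) with hb
    have hsub : ({x, x + a, y} : Finset F) ⊆ Finset.univ.filter (fun z => G z + G (z + a) = b) := by
      intro z hz
      simp only [Finset.mem_insert, Finset.mem_singleton] at hz
      rw [Finset.mem_filter]
      refine ⟨Finset.mem_univ _, ?_⟩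
      rcases hz with rfl | rfl | rfl
      · rfl
      · exact hDshift x
      · exact hxy.symm
    have hxy1 : x ∉ ({x + a, y} : Finset F) := by
      simp only [Finset.mem_insert, Finset.mem_singleton]
      push_neg
      exact ⟨hne x, fun e => h1 e.symm⟩
    have hxy2 : (x + a) ∉ ({y} : Finset F) := by
      simp only [Finset.mem_singleton]
      exact fun e => h2 e.symm
    have hcard3 : ({x, x + a, y} : Finset F).card = 3 := by
      rw [Finset.card_insert_of_notMem hxy1, Finset.card_insert_of_notMem hxy2,
        Finset.card_singleton]
    have hge : 3 ≤ delta G a b := by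
      rw [delta, ← hcard3]
      exact Finset.card_le_card hsub
    rcases h b with h0 | h0 <;> omega
  · intro h b
    rcases Finset.eq_empty_or_nonempty (Finset.univ.filter fun x : F => G x + G (x + a) = b)
      with he | ⟨x, hx⟩
    · left; rw [delta, he, Finset.card_empty]
    · right
      rw [Finset.mem_filter] at hx
      have heq : (Finset.univ.filter fun z : F => G z + G (z + a) = b) = {x, x + a} := by
        ext z
        simp only [Finset.mem_filter, Finset.mem_univ, true_and, Finset.mem_insert,
          Finset.mem_singleton]
        constructor
        · intro hz
          exact h x z (hx.2.trans hz.symm)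
        · rintro (rfl | rfl)
          · exact hx.2
          · rw [hDshift]; exact hx.2
      rw [delta, heq, Finset.card_insert_of_notMem (by simpa using hne x), Finset.card_singleton]

lemma Fmod_zero (α : F) : Fmod α 0 = α⁻¹ := by simp [Fmod]
lemma Fmod_alpha (α : F) (hα : α ≠ 0) : Fmod α α = 0 := by simp [Fmod, hα]
lemma Fmod_eval (α x : F) (hx0 : x ≠ 0) (hxα : x ≠ α) : Fmod α x = x⁻¹ := by
  simp [Fmod, hx0, hxα]

lemma Dval_cases (α a : F) (hα : α ≠ 0) (ha : a ≠ 0) (haα : a ≠ α) (x : F) :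
    (Fmod α x + Fmod α (x + a) = (a + α) / (a * α) ∧ (x = 0 ∨ x = a)) ∨
    (Fmod α x + Fmod α (x + a) = (a + α)⁻¹ ∧ (x = α ∨ x = a + α)) ∨
    (Fmod α x + Fmod α (x + a) = a / (x * (x + a)) ∧
      x ≠ 0 ∧ x ≠ a ∧ x ≠ α ∧ x ≠ a + α) := by
  have h2 : (2 : F) = 0 := CharTwo.two_eq_zero
  have haα0 : a + α ≠ 0 := fun hh => haα (by linear_combination hh - α * h2)
  have haα2 : a + α ≠ α := fun hh => ha (by linear_combination hh)
  have hval0 : α⁻¹ + a⁻¹ = (a + α) / (a * α) := by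
    rw [eq_div_iff (mul_ne_zero ha hα), add_mul]
    have e1 : α⁻¹ * (a * α) = a := by rw [mul_comm a α, inv_mul_cancel_left₀ hα]
    have e2 : a⁻¹ * (a * α) = α := by rw [inv_mul_cancel_left₀ ha]
    rw [e1, e2]
  by_cases hx0 : x = 0
  · left
    refine ⟨?_, Or.inl hx0⟩
    rw [hx0, zero_add, Fmod_zero, Fmod_eval α a ha haα]
    exact hval0
  · by_cases hxa : x = a
    · left
      refine ⟨?_, Or.inr hxa⟩
      have e : x + a = 0 := by rw [hxa]; exact CharTwo.add_self_eq_zero a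
      have hxα' : x ≠ α := by rw [hxa]; exact haα
      rw [e, Fmod_zero, Fmod_eval α x hx0 hxα', hxa, add_comm]
      exact hval0
    · by_cases hxα : x = α
      · right; left
        refine ⟨?_, Or.inl hxα⟩
        have e1 : Fmod α x = 0 := by rw [hxα]; exact Fmod_alpha α hα
        have e2 : x + a = a + α := by rw [hxα, add_comm]
        rw [e1, e2, Fmod_eval α (a + α) haα0 haα2, zero_add]
      · by_cases hxaα : x = a + α
        · right; left
          refine ⟨?_, Or.inr hxaα⟩
          have e : x + a = α := by rw [hxaα]; linear_combination a * h2
          rw [e, Fmod_alpha α hα, add_zero, hxaα,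
            Fmod_eval α (a + α) haα0 haα2]
        · right; right
          have hxa0 : x + a ≠ 0 := fun hh => hxa (by linear_combination hh - a * h2)
          have hxaα' : x + a ≠ α := fun hh => hxaα (by linear_combination hh - a * h2)
          refine ⟨?_, hx0, hxa, hxα, hxaα⟩
          rw [Fmod_eval α x hx0 hxα, Fmod_eval α (x + a) hxa0 hxaα',
            eq_div_iff (mul_ne_zero hx0 hxa0), add_mul]
          have e1 : x⁻¹ * (x * (x + a)) = x + a := by rw [inv_mul_cancel_left₀ hx0]
          have e2 : (x + a)⁻¹ * (x * (x + a)) = x := by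
            rw [mul_comm x (x + a), inv_mul_cancel_left₀ hxa0]
          rw [e1, e2]
          linear_combination x * h2

end Aux

/-- the row spectrum of `F_{0,α}` for even `n ≥ 4`. -/
theorem stmt_9 (n : ℕ) (hn : 4 ≤ n) (heven : Even n)
    [CharP F 2] (hcard : Fintype.card F = 2 ^ n)
    (α : F) (hα : α ≠ 0) (ω : F) (hω : ω ^ 2 = ω + 1) :
    ∀ a : F, a ≠ 0 →
      (TwoToOne (Fmod α) a ↔
        (a ≠ α ∧ a ≠ α * ω ∧ a ≠ α * ω ^ 2 ∧
          Tr n (α / (a + α)) = 1 ∧ Tr n (α / a) = 1)) := by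
  intro a ha
  have h2 : (2 : F) = 0 := CharTwo.two_eq_zero
  have hq : ∀ z : F, z ^ (2 ^ n) = z := fun z => by
    rw [← hcard]; exact FiniteField.pow_card z
  have hn1 : 1 ≤ n := by omega
  have hω0 : ω ≠ 0 := by
    intro h; rw [h] at hω
    exact one_ne_zero (α := F) (by linear_combination -hω)
  have hω1 : ω ≠ 1 := by
    intro h; rw [h] at hω
    exact one_ne_zero (α := F) (by linear_combination -hω)
  have hω2ne1 : ω ^ 2 ≠ 1 := by
    intro h
    exact hω0 (by linear_combination h - hω)
  have hsqinj : ∀ s t : F, s ^ 2 = t ^ 2 → s = t := by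
    intro s t h
    have h0 : (s + t) ^ 2 = 0 := by linear_combination h + (s * t + t ^ 2) * h2
    have h1 := sq_eq_zero_iff.mp h0
    linear_combination h1 - t * h2
  rw [twoToOne_iff (Fmod α) a ha]
  constructor
  · intro hP
    have h1 : a ≠ α := by
      intro h
      have hne2 : α * ω ≠ α := fun hh => hω1 (mul_left_cancel₀ hα (by linear_combination hh))
      have hne3 : α * ω ^ 2 ≠ α := fun hh =>
        hω2ne1 (mul_left_cancel₀ hα (by linear_combination hh))
      have hkey : α * ω + α = α * ω ^ 2 := by linear_combination (-α) * hω
      have i1 : (α * ω)⁻¹ = α⁻¹ * ω ^ 2 := by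
        apply inv_eq_of_mul_eq_one_right
        have e : α * ω * (α⁻¹ * ω ^ 2) = (α * α⁻¹) * ω ^ 3 := by ring
        rw [e, mul_inv_cancel₀ hα, one_mul]
        linear_combination (ω + 1) * hω + ω * h2
      have i2 : (α * ω ^ 2)⁻¹ = α⁻¹ * ω := by
        apply inv_eq_of_mul_eq_one_right
        have e : α * ω ^ 2 * (α⁻¹ * ω) = (α * α⁻¹) * ω ^ 3 := by ring
        rw [e, mul_inv_cancel₀ hα, one_mul]
        linear_combination (ω + 1) * hω + ω * h2
      have heq : Fmod α 0 + Fmod α (0 + a) = Fmod α (α * ω) + Fmod α (α * ω + a) := by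
        rw [zero_add, h, Fmod_zero, Fmod_alpha α hα, hkey,
          Fmod_eval α (α * ω) (mul_ne_zero hα hω0) hne2,
          Fmod_eval α (α * ω ^ 2) (mul_ne_zero hα (pow_ne_zero 2 hω0)) hne3, i1, i2]
        linear_combination (-α⁻¹) * hω + (-α⁻¹ * ω) * h2
      rcases hP 0 (α * ω) heq with hc | hc
      · exact (mul_ne_zero hα hω0) hc
      · rw [zero_add, h] at hc; exact hne2 hc
    have haα0 : a + α ≠ 0 := fun hh => h1 (by linear_combination hh - α * h2)
    have h2' : a ≠ α * ω := by
      intro h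
      have hne1 : α * ω ≠ α := fun hh => hω1 (mul_left_cancel₀ hα (by linear_combination hh))
      have hkey : α + α * ω = α * ω ^ 2 := by linear_combination (-α) * hω
      have i1 : (α * ω)⁻¹ = α⁻¹ * ω ^ 2 := by
        apply inv_eq_of_mul_eq_one_right
        have e : α * ω * (α⁻¹ * ω ^ 2) = (α * α⁻¹) * ω ^ 3 := by ring
        rw [e, mul_inv_cancel₀ hα, one_mul]
        linear_combination (ω + 1) * hω + ω * h2
      have i2 : (α * ω ^ 2)⁻¹ = α⁻¹ * ω := by
        apply inv_eq_of_mul_eq_one_right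
        have e : α * ω ^ 2 * (α⁻¹ * ω) = (α * α⁻¹) * ω ^ 3 := by ring
        rw [e, mul_inv_cancel₀ hα, one_mul]
        linear_combination (ω + 1) * hω + ω * h2
      have hne3 : α * ω ^ 2 ≠ 0 := mul_ne_zero hα (pow_ne_zero 2 hω0)
      have hne4 : α * ω ^ 2 ≠ α := fun hh =>
        hω2ne1 (mul_left_cancel₀ hα (by linear_combination hh))
      have heq : Fmod α 0 + Fmod α (0 + a) = Fmod α α + Fmod α (α + a) := by
        rw [zero_add, h, Fmod_zero, Fmod_alpha α hα, hkey,
          Fmod_eval α (α * ω) (mul_ne_zero hα hω0) hne1,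
          Fmod_eval α (α * ω ^ 2) hne3 hne4, i1, i2]
        linear_combination α⁻¹ * hω + α⁻¹ * h2
      rcases hP 0 α heq with hc | hc
      · exact hα hc
      · rw [zero_add, h] at hc; exact hne1 hc.symm
    have h3' : a ≠ α * ω ^ 2 := by
      intro h
      have hne3 : α * ω ^ 2 ≠ 0 := mul_ne_zero hα (pow_ne_zero 2 hω0)
      have hne4 : α * ω ^ 2 ≠ α := fun hh =>
        hω2ne1 (mul_left_cancel₀ hα (by linear_combination hh))
      have hne1 : α * ω ≠ α := fun hh => hω1 (mul_left_cancel₀ hα (by linear_combination hh))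
      have hkey : α + α * ω ^ 2 = α * ω := by linear_combination α * hω + α * h2
      have i1 : (α * ω)⁻¹ = α⁻¹ * ω ^ 2 := by
        apply inv_eq_of_mul_eq_one_right
        have e : α * ω * (α⁻¹ * ω ^ 2) = (α * α⁻¹) * ω ^ 3 := by ring
        rw [e, mul_inv_cancel₀ hα, one_mul]
        linear_combination (ω + 1) * hω + ω * h2
      have i2 : (α * ω ^ 2)⁻¹ = α⁻¹ * ω := by
        apply inv_eq_of_mul_eq_one_right
        have e : α * ω ^ 2 * (α⁻¹ * ω) = (α * α⁻¹) * ω ^ 3 := by ring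
        rw [e, mul_inv_cancel₀ hα, one_mul]
        linear_combination (ω + 1) * hω + ω * h2
      have heq : Fmod α 0 + Fmod α (0 + a) = Fmod α α + Fmod α (α + a) := by
        rw [zero_add, h, Fmod_zero, Fmod_alpha α hα, hkey,
          Fmod_eval α (α * ω ^ 2) hne3 hne4,
          Fmod_eval α (α * ω) (mul_ne_zero hα hω0) hne1, i1, i2]
        linear_combination (-α⁻¹) * hω
      rcases hP 0 α heq with hc | hc
      · exact hα hc
      · rw [zero_add, h] at hc; exact hne4 hc.symm
    have h4 : Tr n (α / (a + α)) = 1 := by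
      rcases Tr_zero_or_one n hq (α / (a + α)) with h0 | h0
      swap
      · exact h0
      exfalso
      obtain ⟨u, hu⟩ := (Tr_eq_zero_iff n hn1 hcard hq _).mp h0
      rw [eq_div_iff haα0] at hu
      have hu0 : u ≠ 0 := by
        intro h; rw [h] at hu
        exact hα (by linear_combination -hu)
      have hu1 : u ≠ 1 := by
        intro h; rw [h] at hu
        exact hα (by linear_combination -hu + (a + α) * h2)
      set x := a * u with hx
      have hx0 : x ≠ 0 := mul_ne_zero ha hu0
      have hxa : x ≠ a := by
        intro h
        exact hu1 (mul_left_cancel₀ ha (by rw [mul_one]; exact h))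
      have hkey : (x ^ 2 + a * x) * (a + α) = a ^ 2 * α := by
        rw [hx]; linear_combination a ^ 2 * hu
      have hxα : x ≠ α := by
        intro h; rw [h] at hkey
        have e : (a + α) ^ 2 = a ^ 2 := mul_left_cancel₀ hα (by linear_combination hkey)
        exact hα (by linear_combination (hsqinj _ _ e))
      have hxaα : x ≠ a + α := by
        intro h; rw [h] at hkey
        have e : (a + α) ^ 2 = a ^ 2 := mul_left_cancel₀ hα
          (by linear_combination hkey - a * (a + α) ^ 2 * h2)
        exact hα (by linear_combination (hsqinj _ _ e))
      have hxa0 : x + a ≠ 0 := fun hh => hxa (by linear_combination hh - a * h2)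
      have hprod : x * (x + a) ≠ 0 := mul_ne_zero hx0 hxa0
      have hv0 : Fmod α 0 + Fmod α (0 + a) = (a + α) / (a * α) := by
        rcases Dval_cases α a hα ha h1 0 with ⟨hv, _⟩ | ⟨_, hc⟩ | ⟨_, hc, _⟩
        · exact hv
        · rcases hc with hc | hc
          · exact absurd hc.symm hα
          · exact absurd hc.symm haα0
        · exact absurd rfl hc
      have hvx : Fmod α x + Fmod α (x + a) = a / (x * (x + a)) := by
        rcases Dval_cases α a hα ha h1 x with ⟨_, hc⟩ | ⟨_, hc⟩ | ⟨hv, _⟩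
        · rcases hc with hc | hc
          · exact absurd hc hx0
          · exact absurd hc hxa
        · rcases hc with hc | hc
          · exact absurd hc hxα
          · exact absurd hc hxaα
        · exact hv
      have heq : Fmod α 0 + Fmod α (0 + a) = Fmod α x + Fmod α (x + a) := by
        rw [hv0, hvx, div_eq_div_iff (mul_ne_zero ha hα) hprod]
        linear_combination hkey
      rcases hP 0 x heq with hc | hc
      · exact hx0 hc
      · rw [zero_add] at hc; exact hxa hc
    have h5 : Tr n (α / a) = 1 := by
      rcases Tr_zero_or_one n hq (α / a) with h0 | h0
      swap
      · exact h0
      exfalso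
      have hsplit : (a + α) / a = 1 + α / a := by
        rw [add_div, div_self ha]
      have h0' : Tr n ((a + α) / a) = 0 := by
        rw [hsplit, Tr_add, Tr_one_eq_zero n heven, h0, add_zero]
      obtain ⟨u, hu⟩ := (Tr_eq_zero_iff n hn1 hcard hq _).mp h0'
      rw [eq_div_iff ha] at hu
      have hu0 : u ≠ 0 := by
        intro h; rw [h] at hu
        exact haα0 (by linear_combination -hu)
      have hu1 : u ≠ 1 := by
        intro h; rw [h] at hu
        exact h1 (by linear_combination hu)
      set x := a * u with hx
      have hx0 : x ≠ 0 := mul_ne_zero ha hu0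
      have hxa : x ≠ a := by
        intro h
        exact hu1 (mul_left_cancel₀ ha (by rw [mul_one]; exact h))
      have hkey : x ^ 2 + a * x = a * (a + α) := by
        rw [hx]; linear_combination a * hu
      have hxα : x ≠ α := by
        intro h; rw [h] at hkey
        have e : α ^ 2 = a ^ 2 := by linear_combination hkey
        exact h1 (hsqinj _ _ e).symm
      have hxaα : x ≠ a + α := by
        intro h; rw [h] at hkey
        have e : (a + α) ^ 2 = 0 := by linear_combination hkey
        exact haα0 (sq_eq_zero_iff.mp e)
      have hxa0 : x + a ≠ 0 := fun hh => hxa (by linear_combination hh - a * h2)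
      have hprod : x * (x + a) ≠ 0 := mul_ne_zero hx0 hxa0
      have hvα : Fmod α α + Fmod α (α + a) = (a + α)⁻¹ := by
        rcases Dval_cases α a hα ha h1 α with ⟨_, hc⟩ | ⟨hv, _⟩ | ⟨_, _, _, hc, _⟩
        · rcases hc with hc | hc
          · exact absurd hc hα
          · exact absurd hc.symm h1
        · exact hv
        · exact absurd rfl hc
      have hvx : Fmod α x + Fmod α (x + a) = a / (x * (x + a)) := by
        rcases Dval_cases α a hα ha h1 x with ⟨_, hc⟩ | ⟨_, hc⟩ | ⟨hv, _⟩
        · rcases hc with hc | hc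
          · exact absurd hc hx0
          · exact absurd hc hxa
        · rcases hc with hc | hc
          · exact absurd hc hxα
          · exact absurd hc hxaα
        · exact hv
      have heq : Fmod α α + Fmod α (α + a) = Fmod α x + Fmod α (x + a) := by
        rw [hvα, hvx, inv_eq_one_div, div_eq_div_iff haα0 hprod]
        linear_combination hkey
      rcases hP α x heq with hc | hc
      · exact hxα hc
      · rw [add_comm α a] at hc; exact hxaα hc
    exact ⟨h1, h2', h3', h4, h5⟩
  · rintro ⟨haα, haω, haω2, ht1, ht2⟩ x y hxy
    have haα0 : a + α ≠ 0 := fun hh => haα (by linear_combination hh - α * h2)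
    have contra12 : (a + α) / (a * α) = (a + α)⁻¹ → False := by
      intro hh
      rw [div_eq_iff (mul_ne_zero ha hα)] at hh
      have e : (a + α) * (a + α) = a * α := by
        calc (a + α) * (a + α) = ((a + α)⁻¹ * (a * α)) * (a + α) := by rw [← hh]
          _ = a * α := by rw [mul_comm ((a + α)⁻¹) (a * α), mul_assoc,
                inv_mul_cancel₀ haα0, mul_one]
      have hkey : a ^ 2 + a * α + α ^ 2 = 0 := by linear_combination e
      have hfac : (a + α * ω) * (a + α * ω ^ 2) = 0 := by
        linear_combination hkey + (a * α + α ^ 2 * (ω + 1)) * hω + (a * α * ω + α ^ 2 * ω) * h2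
      rcases mul_eq_zero.mp hfac with hc | hc
      · exact haω (by linear_combination hc - α * ω * h2)
      · exact haω2 (by linear_combination hc - α * ω ^ 2 * h2)
    have contra1 : ∀ z : F, z ≠ 0 → z ≠ a → (a + α) / (a * α) = a / (z * (z + a)) → False := by
      intro z hz0 hza hh
      have hza0 : z + a ≠ 0 := fun e => hza (by linear_combination e - a * h2)
      have hprod : z * (z + a) ≠ 0 := mul_ne_zero hz0 hza0
      have hkey : (a + α) * (z * (z + a)) = a * (a * α) :=
        (div_eq_div_iff (mul_ne_zero ha hα) hprod).mp hh
      have hTr : Tr n (α / (a + α)) = 0 := by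
        apply (Tr_eq_zero_iff n hn1 hcard hq _).mpr
        refine ⟨z / a, ?_⟩
        have ha2 : (a : F) ^ 2 ≠ 0 := pow_ne_zero _ ha
        rw [div_pow, div_add_div _ _ ha2 ha, div_eq_div_iff (mul_ne_zero ha2 ha) haα0]
        linear_combination a * hkey
      rw [hTr] at ht1
      exact zero_ne_one ht1
    have contra2 : ∀ z : F, z ≠ 0 → z ≠ a → (a + α)⁻¹ = a / (z * (z + a)) → False := by
      intro z hz0 hza hh
      have hza0 : z + a ≠ 0 := fun e => hza (by linear_combination e - a * h2)
      have hprod : z * (z + a) ≠ 0 := mul_ne_zero hz0 hza0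
      have hkey : 1 * (z * (z + a)) = a * (a + α) := by
        rw [inv_eq_one_div] at hh
        exact (div_eq_div_iff haα0 hprod).mp hh
      have hTr : Tr n ((a + α) / a) = 0 := by
        apply (Tr_eq_zero_iff n hn1 hcard hq _).mpr
        refine ⟨z / a, ?_⟩
        have ha2 : (a : F) ^ 2 ≠ 0 := pow_ne_zero _ ha
        rw [div_pow, div_add_div _ _ ha2 ha, div_eq_div_iff (mul_ne_zero ha2 ha) ha]
        linear_combination a ^ 2 * hkey
      have hsplit : (a + α) / a = 1 + α / a := by rw [add_div, div_self ha]
      rw [hsplit, Tr_add, Tr_one_eq_zero n heven, ht2, zero_add] at hTr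
      exact one_ne_zero hTr
    rcases Dval_cases α a hα ha haα x with ⟨hvx, hcx⟩ | ⟨hvx, hcx⟩ | ⟨hvx, hx0, hxa, hxα, hxaα⟩ <;>
      rcases Dval_cases α a hα ha haα y with ⟨hvy, hcy⟩ | ⟨hvy, hcy⟩ | ⟨hvy, hy0, hya, hyα, hyaα⟩ <;>
      rw [hvx, hvy] at hxy
    · -- b1 b1
      rcases hcx with hx | hx <;> rcases hcy with hy | hy
      · exact Or.inl (hy.trans hx.symm)
      · exact Or.inr (by rw [hy, hx, zero_add])
      · exact Or.inr (by rw [hy, hx, CharTwo.add_self_eq_zero])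
      · exact Or.inl (hy.trans hx.symm)
    · exact absurd hxy contra12
    · exact absurd (contra1 y hy0 hya hxy) not_false
    · exact absurd hxy.symm contra12
    · -- b2 b2
      rcases hcx with hx | hx <;> rcases hcy with hy | hy
      · exact Or.inl (hy.trans hx.symm)
      · exact Or.inr (by rw [hy, hx, add_comm])
      · exact Or.inr (by rw [hy, hx]; linear_combination (-a) * h2)
      · exact Or.inl (hy.trans hx.symm)
    · exact absurd (contra2 y hy0 hya hxy) not_false
    · exact absurd (contra1 x hx0 hxa hxy.symm) not_false
    · exact absurd (contra2 x hx0 hxa hxy.symm) not_false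
    · -- generic generic
      have hxa0 : x + a ≠ 0 := fun e => hxa (by linear_combination e - a * h2)
      have hya0 : y + a ≠ 0 := fun e => hya (by linear_combination e - a * h2)
      have hprodx : x * (x + a) ≠ 0 := mul_ne_zero hx0 hxa0
      have hprody : y * (y + a) ≠ 0 := mul_ne_zero hy0 hya0
      have hkey : a * (y * (y + a)) = a * (x * (x + a)) :=
        (div_eq_div_iff hprodx hprody).mp hxy
      have hprod : x * (x + a) = y * (y + a) := (mul_left_cancel₀ ha hkey).symm
      have hfac : (y + x) * (y + x + a) = 0 := by
        linear_combination hprod + (y ^ 2 + a * y + x * y) * h2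
      rcases mul_eq_zero.mp hfac with hc | hc
      · exact Or.inl (by linear_combination hc - x * h2)
      · exact Or.inr (by linear_combination hc - (x + a) * h2)


end APNPaper
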